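/- Let f be homogeneous and g ∈ (f)_{S_d} homogeneous with deg(g) = deg(f). Then f = g' + h where g' consists precisely of the terms of f whose order type appears in g (so g' contains exactly the same order types as g) and h shares no order types with g. Moreover, if g(𝟏) ≠ 0 then g'(𝟏) ≠ 0. -/

import Mathlib

open MvPolynomial

def symOrbit {k : Type*} [CommSemiring k] {d : ℕ} (f : MvPolynomial (Fin d) k) :
    Set (MvPolynomial (Fin d) k) :=
  Set.range (fun σ : Equiv.Perm (Fin d) => rename σ f)

noncomputable def psi {k : Type*} [CommSemiring k] {d : ℕ} (f : MvPolynomial (Fin d) k) :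
    Ideal (MvPolynomial (Fin d) k) :=
  Ideal.span (symOrbit f)

def orderType {d : ℕ} (s : Fin d →₀ ℕ) : Multiset ℕ :=
  Multiset.map (s : Fin d → ℕ) Finset.univ.val

/-- The set of order types appearing among the monomials of `f`. -/
def orderTypes {k : Type*} [CommSemiring k] {d : ℕ} (f : MvPolynomial (Fin d) k) :
    Set (Multiset ℕ) :=
  {t | ∃ m ∈ f.support, orderType m = t}

def sharesOrderType {k : Type*} [CommSemiring k] {d : ℕ}
    (f g : MvPolynomial (Fin d) k) : Prop :=
  ∃ m ∈ f.support, ∃ m' ∈ g.support, orderType m = orderType m'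

lemma orderType_mapDomain {d : ℕ} (σ : Equiv.Perm (Fin d)) (s : Fin d →₀ ℕ) :
    orderType (Finsupp.mapDomain σ s) = orderType s := by
  unfold orderType
  have h1 : ((Finsupp.mapDomain (σ : Fin d → Fin d) s : Fin d →₀ ℕ) : Fin d → ℕ)
      = fun i => s (σ.symm i) := by
    funext i; exact Finsupp.mapDomain_equiv_apply s i
  have h2 : (Finset.univ.val : Multiset (Fin d)) =
      Multiset.map σ Finset.univ.val := by
    have := Finset.univ_map_equiv_to_embedding σ
    calc (Finset.univ.val : Multiset (Fin d))
        = (Finset.univ.map σ.toEmbedding).val := by rw [this]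
      _ = Multiset.map σ Finset.univ.val := Finset.map_val _ _
  rw [h1]
  conv_lhs => rw [h2]
  rw [Multiset.map_map]
  congr 1
  funext i
  simp

lemma coeff_rename_perm {k : Type*} [CommSemiring k] {d : ℕ} (σ : Equiv.Perm (Fin d))
    (p : MvPolynomial (Fin d) k) (u : Fin d →₀ ℕ) :
    coeff u (rename σ p) = coeff (Finsupp.mapDomain σ.symm u) p := by
  have hu : u = Finsupp.mapDomain (σ : Fin d → Fin d) (Finsupp.mapDomain σ.symm u) := by
    rw [← Finsupp.mapDomain_comp]
    simp
  conv_lhs => rw [hu]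
  exact coeff_rename_mapDomain σ σ.injective p _

lemma coeff_filter_sum {k : Type*} [CommSemiring k] {d : ℕ} (p : MvPolynomial (Fin d) k)
    (P : (Fin d →₀ ℕ) → Prop) [DecidablePred P] (u : Fin d →₀ ℕ) :
    coeff u (∑ m ∈ p.support.filter P, monomial m (coeff m p)) =
      if P u then coeff u p else 0 := by
  rw [coeff_sum]
  simp_rw [coeff_monomial]
  rw [Finset.sum_ite_eq' (p.support.filter P) u (fun m => coeff m p)]
  by_cases hP : P u
  · by_cases hu : u ∈ p.support
    · simp [Finset.mem_filter, hu, hP]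
    · simp [Finset.mem_filter, hu, hP, notMem_support_iff.1 hu]
  · simp [Finset.mem_filter, hP]

lemma homogComp_mul_homog {k : Type*} [CommSemiring k] {d n : ℕ}
    (p q : MvPolynomial (Fin d) k) (hq : q.IsHomogeneous n) :
    homogeneousComponent n (p * q) = C (coeff 0 p) * q := by
  conv_lhs => rw [← sum_homogeneousComponent p, Finset.sum_mul]
  rw [map_sum]
  have hterm : ∀ i ∈ Finset.range (p.totalDegree + 1),
      homogeneousComponent n (homogeneousComponent i p * q) =
        if i = 0 then C (coeff 0 p) * q else 0 := by
    intro i _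
    have hi : (homogeneousComponent i p * q).IsHomogeneous (i + n) :=
      (homogeneousComponent_isHomogeneous i p).mul hq
    rw [homogeneousComponent_of_mem ((mem_homogeneousSubmodule (i + n) _).2 hi)]
    by_cases h : i = 0
    · subst h; simp
    · rw [if_neg (by omega), if_neg h]
  rw [Finset.sum_congr rfl hterm,
    Finset.sum_ite_eq' (Finset.range (p.totalDegree + 1)) 0
      (fun _ => C (coeff 0 p) * q)]
  simp

theorem order_type_split_up {k : Type*} [Field k] {d n : ℕ}
    (f : MvPolynomial (Fin d) k) (hfhom : f.IsHomogeneous n)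
    (g : MvPolynomial (Fin d) k) (hg : g ∈ psi f) (hghom : g.IsHomogeneous n) :
    ∃ g' h : MvPolynomial (Fin d) k,
      f = g' + h ∧
      (∀ m ∈ g'.support, orderType m ∈ orderTypes g) ∧
      orderTypes g' = orderTypes g ∧
      ¬ sharesOrderType h g ∧
      (eval (fun _ => (1 : k)) g ≠ 0 → eval (fun _ => (1 : k)) g' ≠ 0) := by
  classical
  -- Step 1: write g as a k-linear combination of the rename σ f
  rw [psi, symOrbit, ← Ideal.submodule_span_eq, Submodule.mem_span_range_iff_exists_fun] at hg
  obtain ⟨c, hc⟩ := hg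
  set a : Equiv.Perm (Fin d) → k := fun σ => coeff 0 (c σ) with ha
  have key : g = ∑ σ : Equiv.Perm (Fin d), C (a σ) * rename σ f := by
    have hcomp := congrArg (homogeneousComponent n) hc
    rw [map_sum] at hcomp
    have hgc : homogeneousComponent n g = g := by
      rw [homogeneousComponent_of_mem ((mem_homogeneousSubmodule n _).2 hghom)]
      simp
    rw [hgc] at hcomp
    rw [← hcomp]
    refine Finset.sum_congr rfl fun σ _ => ?_
    rw [smul_eq_mul, homogComp_mul_homog _ _ (hfhom.rename_isHomogeneous)]
  -- coefficients of g via this combination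
  have hcoeffg : ∀ u, coeff u g = ∑ σ : Equiv.Perm (Fin d), a σ * coeff u (rename σ f) := by
    intro u
    conv_lhs => rw [key]
    rw [coeff_sum]
    simp_rw [coeff_C_mul]
  -- Step 2: define g' and h
  set T : Finset (Multiset ℕ) := g.support.image orderType with hT
  have hTmem : ∀ t, t ∈ T ↔ t ∈ orderTypes g := by
    intro t
    simp [hT, Finset.mem_image, orderTypes]
  set g' : MvPolynomial (Fin d) k :=
    ∑ m ∈ f.support.filter (fun m => orderType m ∈ T), monomial m (coeff m f) with hg'
  set h' : MvPolynomial (Fin d) k :=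
    ∑ m ∈ f.support.filter (fun m => orderType m ∉ T), monomial m (coeff m f) with hh'
  have hg'c : ∀ u, coeff u g' = if orderType u ∈ T then coeff u f else 0 := fun u =>
    coeff_filter_sum f _ u
  have hh'c : ∀ u, coeff u h' = if orderType u ∉ T then coeff u f else 0 := fun u =>
    coeff_filter_sum f _ u
  have hsplit : f = g' + h' := by
    ext u
    rw [coeff_add, hg'c, hh'c]
    by_cases h : orderType u ∈ T <;> simp [h]
  have hg'supp : ∀ m ∈ g'.support, orderType m ∈ orderTypes g := by
    intro m hm
    rw [mem_support_iff, hg'c] at hm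
    by_cases h : orderType m ∈ T
    · exact (hTmem _).1 h
    · simp [h] at hm
  -- the key rewriting of g in terms of g'
  have hren : ∀ (σ : Equiv.Perm (Fin d)) u,
      coeff u (rename σ g') = if orderType u ∈ T then coeff u (rename σ f) else 0 := by
    intro σ u
    rw [coeff_rename_perm, coeff_rename_perm, hg'c, orderType_mapDomain]
  have hgg' : g = ∑ σ : Equiv.Perm (Fin d), C (a σ) * rename σ g' := by
    ext u
    rw [coeff_sum]
    simp_rw [coeff_C_mul, hren]
    by_cases hu : orderType u ∈ T
    · simp only [hu, if_true]
      exact hcoeffg u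
    · simp only [hu, if_false, mul_zero, Finset.sum_const_zero]
      by_contra hne
      exact hu (Finset.mem_image_of_mem orderType (mem_support_iff.2 hne))
  refine ⟨g', h', hsplit, hg'supp, ?_, ?_, ?_⟩
  · -- orderTypes g' = orderTypes g
    ext t
    constructor
    · rintro ⟨m, hm, rfl⟩
      exact hg'supp m hm
    · rintro ⟨m, hm, rfl⟩
      have hne : coeff m g ≠ 0 := mem_support_iff.1 hm
      rw [hcoeffg] at hne
      obtain ⟨σ, _, hσ⟩ := Finset.exists_ne_zero_of_sum_ne_zero hne
      have hfc : coeff (Finsupp.mapDomain σ.symm m) f ≠ 0 := by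
        intro h0
        rw [coeff_rename_perm, h0, mul_zero] at hσ
        exact hσ rfl
      have hto : orderType (Finsupp.mapDomain (σ.symm : Fin d → Fin d) m) = orderType m :=
        orderType_mapDomain σ.symm m
      refine ⟨Finsupp.mapDomain σ.symm m, ?_, hto⟩
      rw [mem_support_iff, hg'c, hto, if_pos (Finset.mem_image_of_mem orderType hm)]
      exact hfc
  · -- h' shares no order type with g
    rintro ⟨m, hm, m', hm', heq⟩
    rw [mem_support_iff, hh'c] at hm
    have : orderType m ∈ T := heq ▸ Finset.mem_image_of_mem orderType hm'
    simp [this] at hm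
  · -- evaluation at 1
    intro hne h0
    apply hne
    rw [hgg', map_sum]
    refine Finset.sum_eq_zero fun σ _ => ?_
    rw [map_mul, eval_rename]
    have : eval ((fun _ => (1 : k)) ∘ σ) g' = eval (fun _ => (1 : k)) g' := rfl
    rw [this, h0, mul_zero]
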